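/- Let (X, δ) be a metric-like space, let x₀ be an isolated point of X, and let I be an admissible ideal of subsets of ℕ. If a sequence (x_n) in X is I-convergent to x₀, then (x_n) is I*-convergent to x₀. -/

import Mathlib

open Filter Topology

/-- A metric-like space structure on `X`. -/
structure MetricLike (X : Type*) where
  d : X → X → ℝ
  nonneg : ∀ x y, 0 ≤ d x y
  eq_of_eq_zero : ∀ x y, d x y = 0 → x = y
  symm : ∀ x y, d x y = d y x
  triangle : ∀ x y z, d x y ≤ d x z + d z y

/-- `I` is an ideal of subsets of `ℕ`. -/
def IsIdeal (I : Set (Set ℕ)) : Prop :=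
  ∅ ∈ I ∧ (∀ A B : Set ℕ, A ∈ I → B ∈ I → A ∪ B ∈ I) ∧
    (∀ A B : Set ℕ, A ∈ I → B ⊆ A → B ∈ I)

/-- `I` is an admissible ideal of subsets of `ℕ`. -/
def IsAdmissibleIdeal (I : Set (Set ℕ)) : Prop :=
  IsIdeal I ∧ (Set.univ : Set ℕ) ∉ I ∧ ∀ n : ℕ, ({n} : Set ℕ) ∈ I

/-- Usual convergence of a sequence in a metric-like space. -/
def MLConv {X : Type*} (δ : MetricLike X) (x : ℕ → X) (x₀ : X) : Prop :=
  ∀ ε : ℝ, 0 < ε → ∃ k₀ : ℕ, ∀ n ≥ k₀, |δ.d (x n) x₀ - δ.d x₀ x₀| < ε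

/-- `I`-convergence of a sequence in a metric-like space. -/
def MLIConv (I : Set (Set ℕ)) {X : Type*} (δ : MetricLike X) (x : ℕ → X) (x₀ : X) : Prop :=
  ∀ ε : ℝ, 0 < ε → {n : ℕ | ε ≤ |δ.d (x n) x₀ - δ.d x₀ x₀|} ∈ I

/-- `I*`-convergence of a sequence in a metric-like space: there is a set
`M = {n₁ < n₂ < …}` in the filter `F(I)` (i.e. with complement in `I`) such that
`δ(x_{n_k}, x₀) → δ(x₀, x₀)`. -/
def MLIStarConv (I : Set (Set ℕ)) {X : Type*} (δ : MetricLike X) (x : ℕ → X) (x₀ : X) : Prop :=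
  ∃ M : Set ℕ, Mᶜ ∈ I ∧ ∃ nk : ℕ → ℕ, StrictMono nk ∧ Set.range nk = M ∧
    Tendsto (fun k => δ.d (x (nk k)) x₀) atTop (𝓝 (δ.d x₀ x₀))

/-- The open `δ`-ball with centre `c` and radius `ε`. -/
def MLBall {X : Type*} (δ : MetricLike X) (c : X) (ε : ℝ) : Set X :=
  {x : X | |δ.d x c - δ.d c c| < ε}

/-- The `T₀` separation axiom for a metric-like space. -/
def MLT0 {X : Type*} (δ : MetricLike X) : Prop :=
  ∀ x y : X, x ≠ y → ∃ (c : X) (ε : ℝ), 0 < ε ∧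
    ((x ∈ MLBall δ c ε ∧ y ∉ MLBall δ c ε) ∨ (y ∈ MLBall δ c ε ∧ x ∉ MLBall δ c ε))

/-- `x₀` is a limit point of the metric-like space `X`. -/
def MLLimitPoint {X : Type*} (δ : MetricLike X) (x₀ : X) : Prop :=
  ∀ r : ℝ, 0 < r → (MLBall δ x₀ r ∩ {x₀}ᶜ).Nonempty

/-- `x₀` is an isolated point of the metric-like space `X`. -/
def MLIsolated {X : Type*} (δ : MetricLike X) (x₀ : X) : Prop :=
  ∃ r : ℝ, 0 < r ∧ MLBall δ x₀ r = {x₀}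

/-- The condition (AP) for an ideal of subsets of `ℕ`. -/
def HasAP (I : Set (Set ℕ)) : Prop :=
  ∀ A : ℕ → Set ℕ, (∀ j, A j ∈ I) → (∀ i j, i ≠ j → Disjoint (A i) (A j)) →
    ∃ B : ℕ → Set ℕ, (∀ j, (symmDiff (A j) (B j)).Finite) ∧ (⋃ j, B j) ∈ I

theorem ideal_convergent_imp_ideal_star_convergent_of_isolated {X : Type*}
    (δ : MetricLike X) (x₀ : X) (hx₀ : MLIsolated δ x₀)
    (I : Set (Set ℕ)) (hI : IsAdmissibleIdeal I) (x : ℕ → X)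
    (h : MLIConv I δ x x₀) : MLIStarConv I δ x x₀ := by
  obtain ⟨r₀, hr₀, hball⟩ := hx₀
  obtain ⟨⟨hempty, hunion, hsub⟩, huniv, hsingle⟩ := hI
  have hfin : ∀ s : Set ℕ, s.Finite → s ∈ I := by
    intro s hs
    refine Set.Finite.induction_on s hs hempty ?_
    intro a t _ _ ih
    rw [Set.insert_eq]
    exact hunion _ _ (hsingle a) ih
  set A := {n : ℕ | r₀ ≤ |δ.d (x n) x₀ - δ.d x₀ x₀|} with hA
  have hAI : A ∈ I := h r₀ hr₀
  have hMinf : Aᶜ.Infinite := by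
    intro hfinM
    have : (Set.univ : Set ℕ) ∈ I := by
      have := hunion _ _ hAI (hfin _ hfinM)
      simpa [Set.union_compl_self] using this
    exact huniv this
  have hmem : ∀ n ∈ Aᶜ, x n = x₀ := by
    intro n hn
    have : x n ∈ MLBall δ x₀ r₀ := by
      simp only [A, Set.mem_compl_iff, Set.mem_setOf_eq, not_le] at hn
      exact hn
    rw [hball] at this
    exact this
  refine ⟨Aᶜ, by simpa using hAI, Nat.nth (· ∈ Aᶜ), Nat.nth_strictMono hMinf,
    Nat.range_nth_of_infinite hMinf, ?_⟩
  have : (fun k => δ.d (x (Nat.nth (· ∈ Aᶜ) k)) x₀) = fun _ => δ.d x₀ x₀ := by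
    funext k
    exact congrArg (δ.d · x₀) (hmem _ (Nat.nth_mem_of_infinite hMinf k))
  rw [this]
  exact tendsto_const_nhds
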